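/- Let α ∈ (0,σ_c/2), m ∈ (0,z_α), and let y solve y'' = ((1-y)/4)[(2α)²f'(y)/((1-y)f(y)³) - 1] with y(0)=m, y'(0)=0, under assumptions (f1)–(f5). If (1-m)f(m) = 2α, then y(t) < 1 for all t > 0, y is strictly increasing on (0,∞), and y(t) → 1 as t → +∞. -/

import Mathlib

open Set Filter

set_option maxHeartbeats 2000000 in
/-- Case (ii) of the ODE analysis: if `(1-m)f(m) = 2α` with `m ∈ (0, z_α)`, the solution of
`y'' = ((1-y)/4)[(2α)²f'(y)/((1-y)f(y)³) - 1]`, `y(0)=m`, `y'(0)=0` (with the right-hand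
side extended by `0` for `y ≥ 1`) satisfies `y < 1` on `(0,∞)`, is strictly increasing
there, and `y(t) → 1` as `t → +∞`. -/
theorem stmt6 (f f' f'' : ℝ → ℝ) (σc α m z : ℝ) (hσ : 0 < σc)
    (hf_nonneg : ∀ s ∈ Ico (0:ℝ) 1, 0 ≤ f s)
    (hf_zero : ∀ s ∈ Ico (0:ℝ) 1, (f s = 0 ↔ s = 0))
    (hc0 : ContinuousOn f (Ico 0 1))
    (hd1 : ∀ s ∈ Ioo (0:ℝ) 1, HasDerivAt f (f' s) s)
    (hd2 : ∀ s ∈ Ioo (0:ℝ) 1, HasDerivAt f' (f'' s) s)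
    (hc2 : ContinuousOn f'' (Ioo 0 1))
    (hf3 : ∀ s ∈ Ioo (0:ℝ) 1, 0 < (1 - s) * f' s - f s)
    (hf2 : Tendsto (fun s => (1 - s) * f s) (nhdsWithin 1 (Iio 1)) (nhds σc))
    (hf4 : ∀ s ∈ Ioo (0:ℝ) 1, deriv (fun t => (1 - t) * f' t / f t) s < 0)
    (hf5 : Tendsto (fun s => ((1 - s) * f' s - f s) / (1 - s) ^ 3)
      (nhdsWithin 1 (Iio 1)) atTop)
    (hα : α ∈ Ioo (0:ℝ) (σc / 2))
    (hz : z ∈ Ioo (0:ℝ) 1)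
    (hzdef : f' z / ((1 - z) * (f z) ^ 3) = 1 / (2 * α) ^ 2)
    (hm : m ∈ Ioo (0:ℝ) z)
    (hcase : (1 - m) * f m = 2 * α)
    (y y' : ℝ → ℝ)
    (hy : ∀ t : ℝ, HasDerivAt y (y' t) t)
    (hy' : ∀ t : ℝ, HasDerivAt y'
      (if y t < 1 then
        (1 - y t) / 4 * ((2 * α) ^ 2 * f' (y t) / ((1 - y t) * (f (y t)) ^ 3) - 1)
      else 0) t)
    (hy0 : y 0 = m) (hy'0 : y' 0 = 0) :
    (∀ t : ℝ, 0 < t → y t < 1) ∧ StrictMonoOn y (Ici 0) ∧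
      Tendsto y atTop (nhds 1) := by
  obtain ⟨hα0, hα1⟩ := hα
  obtain ⟨hm0, hmz⟩ := hm
  have hm1 : m < 1 := hmz.trans hz.2
  have hmI : m ∈ Ioo (0:ℝ) 1 := ⟨hm0, hm1⟩
  have fpos : ∀ s ∈ Ioo (0:ℝ) 1, 0 < f s := by
    intro s hs
    rcases (hf_nonneg s ⟨hs.1.le, hs.2⟩).lt_or_eq with h | h
    · exact h
    · exact absurd ((hf_zero s ⟨hs.1.le, hs.2⟩).mp h.symm) (ne_of_gt hs.1)
  have hfm0 : f m ≠ 0 := (fpos m hmI).ne'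
  have hycont : Continuous y := continuous_iff_continuousAt.mpr fun t => (hy t).continuousAt
  have hy'cont : Continuous y' := continuous_iff_continuousAt.mpr fun t => (hy' t).continuousAt
  -- G strictly monotone: for s ∈ (m,1), 2α < (1-s) f s
  have Gmono : ∀ s, m < s → s < 1 → 2 * α < (1 - s) * f s := by
    have hsm : StrictMonoOn (fun s => (1 - s) * f s) (Ico m 1) := by
      apply strictMonoOn_of_hasDerivWithinAt_pos (convex_Ico m 1)
        (f' := fun s => (1 - s) * f' s - f s)
      · exact ((continuousOn_const.sub continuousOn_id).mul
          (hc0.mono (Ico_subset_Ico hm0.le le_rfl)))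
      · intro x hx
        rw [interior_Ico] at hx
        have hxI : x ∈ Ioo (0:ℝ) 1 := ⟨hm0.trans hx.1, hx.2⟩
        have h : HasDerivAt (fun s => (1 - s) * f s) ((1 - x) * f' x - f x) x := by
          have h0 := ((hasDerivAt_id x).const_sub 1).mul (hd1 x hxI)
          simp only [id_eq] at h0
          exact h0.congr_deriv (by ring)
        exact h.hasDerivWithinAt
      · intro x hx
        rw [interior_Ico] at hx
        exact hf3 x ⟨hm0.trans hx.1, hx.2⟩
    intro s hs1 hs2
    calc 2 * α = (1 - m) * f m := hcase.symm
      _ < (1 - s) * f s := hsm ⟨le_rfl, hm1⟩ ⟨hs1.le, hs2⟩ hs1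
  -- Energy function
  set E : ℝ → ℝ := fun t => (y' t) ^ 2 - (1/4) * ((1 - y t) ^ 2 - (2*α) ^ 2 / (f (y t)) ^ 2)
    with hEdef
  have EderivAt : ∀ t, 0 < y t → y t < 1 → HasDerivAt E 0 t := by
    intro t h0 h1
    have hu : y t ∈ Ioo (0:ℝ) 1 := ⟨h0, h1⟩
    have hfu : f (y t) ≠ 0 := (fpos _ hu).ne'
    have h1u : (1:ℝ) - y t ≠ 0 := sub_ne_zero.mpr (ne_of_gt (by linarith))
    have hy'd := hy' t
    rw [if_pos h1] at hy'd
    have hfy : HasDerivAt (fun s => f (y s)) (f' (y t) * y' t) t := (hd1 _ hu).comp t (hy t)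
    have hE1 : HasDerivAt (fun s => (y' s) ^ 2)
        (2 * (y' t) ^ 1 * ((1 - y t) / 4 *
          ((2 * α) ^ 2 * f' (y t) / ((1 - y t) * (f (y t)) ^ 3) - 1))) t := hy'd.pow 2
    have hE2 : HasDerivAt (fun s => (1 - y s) ^ 2) (2 * (1 - y t) ^ 1 * (-(y' t))) t :=
      ((hy t).const_sub 1).pow 2
    have hfy2 : HasDerivAt (fun s => (f (y s)) ^ 2)
        (2 * (f (y t)) ^ 1 * (f' (y t) * y' t)) t := hfy.pow 2
    have hE3 : HasDerivAt (fun s => (2*α) ^ 2 / (f (y s)) ^ 2)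
        ((0 * (f (y t)) ^ 2 - (2*α) ^ 2 * (2 * (f (y t)) ^ 1 * (f' (y t) * y' t))) /
          ((f (y t)) ^ 2) ^ 2) t :=
      (hasDerivAt_const t ((2*α) ^ 2)).div hfy2 (pow_ne_zero 2 hfu)
    have h := hE1.sub ((hE2.sub hE3).const_mul (1/4))
    exact h.congr_deriv (by field_simp; ring)
  -- Energy vanishes at 0
  have E0 : E 0 = 0 := by
    simp only [hEdef, hy0, hy'0, ← hcase]
    field_simp
    ring
  -- Energy identity
  have KeyE : ∀ T, 0 ≤ T → (∀ s ∈ Icc 0 T, 0 < y s ∧ y s < 1) →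
      (y' T) ^ 2 = (1/4) * ((1 - y T) ^ 2 - (2*α) ^ 2 / (f (y T)) ^ 2) := by
    intro T hT0 hTgood
    have hcont : ContinuousOn E (Icc 0 T) := fun s hs =>
      (EderivAt s (hTgood s hs).1 (hTgood s hs).2).continuousAt.continuousWithinAt
    have hder : ∀ x ∈ Ico (0:ℝ) T, HasDerivWithinAt E 0 (Ici x) x := fun x hx =>
      (EderivAt x (hTgood x ⟨hx.1, hx.2.le⟩).1 (hTgood x ⟨hx.1, hx.2.le⟩).2).hasDerivWithinAt
    have hET : E T = E 0 :=
      constant_of_has_deriv_right_zero hcont hder T ⟨hT0, le_rfl⟩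
    have h := hET.trans E0
    simp only [hEdef] at h
    linarith
  -- positivity of the vector field at value m
  have hmbracket : 0 < (1 - m) / 4 * ((2 * α) ^ 2 * f' m / ((1 - m) * (f m) ^ 3) - 1) := by
    have hfm := fpos m hmI
    have h3 := hf3 m hmI
    have h1m : (0:ℝ) < 1 - m := by linarith
    have key : (2 * α) ^ 2 * f' m / ((1 - m) * (f m) ^ 3) = (1 - m) * f' m / f m := by
      rw [← hcase]; field_simp
    rw [key]
    have h2 : 0 < (1 - m) * f' m / f m - 1 := by
      rw [sub_pos, lt_div_iff₀ hfm]; linarith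
    positivity
  -- ε-claim
  obtain ⟨ε, hε0, hεp⟩ : ∃ ε > 0, ∀ t, |t| ≤ ε → (0 < y t ∧ y t < 1) ∧
      0 < (if y t < 1 then
        (1 - y t) / 4 * ((2 * α) ^ 2 * f' (y t) / ((1 - y t) * (f (y t)) ^ 3) - 1) else 0) := by
    have hf'c : ContinuousAt f' (y 0) := by rw [hy0]; exact (hd2 m hmI).continuousAt
    have hfc : ContinuousAt f (y 0) := by rw [hy0]; exact (hd1 m hmI).continuousAt
    have hycont0 : ContinuousAt y 0 := hycont.continuousAt
    have hg : ContinuousAt (fun t => (1 - y t) / 4 *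
        ((2 * α) ^ 2 * f' (y t) / ((1 - y t) * (f (y t)) ^ 3) - 1)) 0 := by
      have hden : ((1 - y 0) * (f (y 0)) ^ 3) ≠ 0 := by
        rw [hy0]
        exact mul_ne_zero (sub_ne_zero.mpr (ne_of_gt (by linarith))) (pow_ne_zero 3 hfm0)
      have hf'y : ContinuousAt (fun t => f' (y t)) 0 := hf'c.comp hycont0
      have hfy : ContinuousAt (fun t => f (y t)) 0 := hfc.comp hycont0
      exact (((continuousAt_const.sub hycont0).div_const 4).mul
        (((continuousAt_const.mul hf'y).div
          ((continuousAt_const.sub hycont0).mul (hfy.pow 3)) hden).sub continuousAt_const))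
    have hg0 : 0 < (fun t => (1 - y t) / 4 *
        ((2 * α) ^ 2 * f' (y t) / ((1 - y t) * (f (y t)) ^ 3) - 1)) 0 := by
      simpa [hy0] using hmbracket
    have h1 : ∀ᶠ t in nhds (0:ℝ), 0 < (1 - y t) / 4 *
        ((2 * α) ^ 2 * f' (y t) / ((1 - y t) * (f (y t)) ^ 3) - 1) :=
      hg.eventually (eventually_gt_nhds hg0)
    have h2 : ∀ᶠ t in nhds (0:ℝ), y t ∈ Ioo (0:ℝ) 1 := by
      have : Ioo (0:ℝ) 1 ∈ nhds (y 0) := by rw [hy0]; exact isOpen_Ioo.mem_nhds hmI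
      exact hycont0.eventually_mem this
    have h3 := h1.and h2
    rw [Metric.eventually_nhds_iff] at h3
    obtain ⟨δ, hδ0, hδ⟩ := h3
    refine ⟨δ/2, by linarith, fun t ht => ?_⟩
    have ht' : dist t 0 < δ := by rw [Real.dist_eq, sub_zero]; linarith [ht]
    obtain ⟨hg1, hg2⟩ := hδ ht'
    exact ⟨⟨hg2.1, hg2.2⟩, by rw [if_pos hg2.2]; exact hg1⟩
  have hy'eps : ∀ t, 0 < t → t ≤ ε → 0 < y' t := by
    have hsm : StrictMonoOn y' (Icc 0 ε) := by
      apply strictMonoOn_of_hasDerivWithinAt_pos (convex_Icc 0 ε)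
        (f' := fun t => if y t < 1 then
          (1 - y t) / 4 * ((2 * α) ^ 2 * f' (y t) / ((1 - y t) * (f (y t)) ^ 3) - 1) else 0)
        hy'cont.continuousOn (fun x _ => (hy' x).hasDerivWithinAt)
      intro x hx
      rw [interior_Icc] at hx
      exact (hεp x (by rw [abs_of_pos hx.1]; exact hx.2.le)).2
    intro t ht0 htε
    have h := hsm ⟨le_rfl, hε0.le⟩ ⟨ht0.le, htε⟩ ht0
    rwa [hy'0] at h
  -- Main claim: y' > 0 and y < 1 on (0,∞)
  have Main : ∀ t, 0 < t → 0 < y' t ∧ y t < 1 := by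
    by_contra hcon
    push_neg at hcon
    obtain ⟨t₀, ht₀, hbad₀⟩ := hcon
    set S : Set ℝ := {t | 0 < t ∧ ¬(0 < y' t ∧ y t < 1)} with hSdef
    have hSne : S.Nonempty := ⟨t₀, ht₀, fun h => absurd (hbad₀ h.1) (not_le.mpr h.2)⟩
    have hSbdd : BddBelow S := ⟨0, fun s hs => hs.1.le⟩
    set T := sInf S with hTdef
    have hεT : ε ≤ T := by
      apply le_csInf hSne
      intro b hb
      by_contra hbε
      push_neg at hbε
      exact hb.2 ⟨hy'eps b hb.1 hbε.le,
        (hεp b (by rw [abs_of_pos hb.1]; linarith)).1.2⟩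
    have hT0 : 0 < T := lt_of_lt_of_le hε0 hεT
    have hgood_lt : ∀ t, 0 < t → t < T → 0 < y' t ∧ y t < 1 := by
      intro t ht0 htT
      by_contra h
      exact absurd (csInf_le hSbdd ⟨ht0, h⟩) (not_le.mpr htT)
    have hymono : StrictMonoOn y (Icc 0 T) := by
      apply strictMonoOn_of_hasDerivWithinAt_pos (convex_Icc 0 T) (f' := y')
        hycont.continuousOn (fun x _ => (hy x).hasDerivWithinAt)
      intro x hx
      rw [interior_Icc] at hx
      exact (hgood_lt x hx.1 hx.2).1
    have hIcc : ∀ t, 0 ≤ t → t < T → ∀ s ∈ Icc (0:ℝ) t, 0 < y s ∧ y s < 1 := by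
      intro t ht0 htT s hs
      rcases hs.1.lt_or_eq with h | h
      · refine ⟨?_, (hgood_lt s h (lt_of_le_of_lt hs.2 htT)).2⟩
        have h2 : y 0 < y s := hymono ⟨le_rfl, hT0.le⟩ ⟨hs.1, hs.2.trans htT.le⟩ h
        rw [hy0] at h2; linarith
      · rw [← h, hy0]; exact ⟨hm0, hm1⟩
    have hspeed : ∀ t, 0 ≤ t → t < T → y' t ≤ (1 - y t) / 2 := by
      intro t ht0 htT
      have hkey := KeyE t ht0 (hIcc t ht0 htT)
      have hgt := hIcc t ht0 htT t ⟨ht0, le_rfl⟩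
      have h1y : 0 < 1 - y t := by linarith [hgt.2]
      have hc2' : 0 ≤ (2*α) ^ 2 / (f (y t)) ^ 2 := by positivity
      nlinarith [hkey, sq_nonneg (y' t - (1 - y t)/2), sq_nonneg (y' t + (1 - y t)/2)]
    -- Gronwall bound: y T < 1
    have hyT1 : y T < 1 := by
      set g : ℝ → ℝ := fun t => (1 - y t) * Real.exp (t/2) with hgdef
      have hgmono : MonotoneOn g (Icc 0 T) := by
        apply monotoneOn_of_hasDerivWithinAt_nonneg (convex_Icc 0 T)
          (f' := fun t => (-(y' t)) * Real.exp (t/2) +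
            (1 - y t) * (Real.exp (t/2) * (1/2)))
        · exact ((continuous_const.sub hycont).mul
            ((continuous_id.div_const 2).rexp)).continuousOn
        · intro x _
          exact (((hy x).const_sub 1).mul
            (((hasDerivAt_id x).div_const 2).exp)).hasDerivWithinAt
        · intro x hx
          rw [interior_Icc] at hx
          have hs := hspeed x hx.1.le hx.2
          have he : 0 < Real.exp (x/2) := Real.exp_pos _
          nlinarith [hs, he]
      have h0T : g 0 ≤ g T := hgmono ⟨le_rfl, hT0.le⟩ ⟨hT0.le, le_rfl⟩ hT0.le
      have hg0 : g 0 = 1 - m := by simp [hgdef, hy0]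
      rw [hg0] at h0T
      have he : 0 < Real.exp (T/2) := Real.exp_pos _
      by_contra h
      push_neg at h
      have hgT : g T ≤ 0 := mul_nonpos_of_nonpos_of_nonneg (by linarith) he.le
      linarith
    have hyTm : m < y T := by
      have h := hymono ⟨le_rfl, hT0.le⟩ ⟨hT0.le, le_rfl⟩ hT0
      rwa [hy0] at h
    have hy'T0 : 0 ≤ y' T := by
      haveI hne : (nhdsWithin T (Ioo 0 T)).NeBot := by
        rw [← mem_closure_iff_nhdsWithin_neBot, closure_Ioo hT0.ne]
        exact ⟨hT0.le, le_rfl⟩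
      have htd : Tendsto y' (nhdsWithin T (Ioo 0 T)) (nhds (y' T)) :=
        (hy'cont.tendsto T).mono_left nhdsWithin_le_nhds
      refine ge_of_tendsto htd ?_
      filter_upwards [self_mem_nhdsWithin] with x hx
      exact (hgood_lt x hx.1 hx.2).1.le
    have hgoodT : ∀ s ∈ Icc (0:ℝ) T, 0 < y s ∧ y s < 1 := by
      intro s hs
      rcases hs.2.eq_or_lt with h | h
      · rw [h]; exact ⟨lt_trans hm0 hyTm, hyT1⟩
      · exact hIcc s hs.1 h s ⟨hs.1, le_rfl⟩
    have hkeyT := KeyE T hT0.le hgoodT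
    have hfT : 0 < f (y T) := fpos _ ⟨lt_trans hm0 hyTm, hyT1⟩
    have hGT : 2 * α < (1 - y T) * f (y T) := Gmono (y T) hyTm hyT1
    have hy'Tsq : 0 < (y' T) ^ 2 := by
      rw [hkeyT]
      have h1 : (2*α) ^ 2 < ((1 - y T) * f (y T)) ^ 2 :=
        pow_lt_pow_left₀ hGT (by positivity) two_ne_zero
      have h2 : (2*α) ^ 2 / (f (y T)) ^ 2 < (1 - y T) ^ 2 := by
        rw [div_lt_iff₀ (by positivity), ← mul_pow]
        exact h1
      linarith
    have hy'Tpos : 0 < y' T := by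
      rcases hy'T0.lt_or_eq with h | h
      · exact h
      · exfalso; rw [← h] at hy'Tsq; simp at hy'Tsq
    have hTcl : T ∈ closure S := csInf_mem_closure hSne hSbdd
    have hSsub : S ⊆ {t | y' t ≤ 0 ∨ 1 ≤ y t} := by
      intro s hs
      rcases not_and_or.mp hs.2 with h | h
      · exact Or.inl (not_lt.mp h)
      · exact Or.inr (not_lt.mp h)
    have hclosed : IsClosed {t : ℝ | y' t ≤ 0 ∨ 1 ≤ y t} := by
      have h1 : IsClosed {t : ℝ | y' t ≤ 0} := isClosed_le hy'cont continuous_const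
      have h2 : IsClosed {t : ℝ | 1 ≤ y t} := isClosed_le continuous_const hycont
      exact h1.union h2
    have hTbad : y' T ≤ 0 ∨ 1 ≤ y T :=
      hclosed.closure_subset_iff.mpr hSsub hTcl
    rcases hTbad with h | h
    · linarith
    · linarith
  -- conclusions
  have part1 : ∀ t, 0 < t → y t < 1 := fun t ht => (Main t ht).2
  have part2 : StrictMonoOn y (Ici 0) := by
    apply strictMonoOn_of_hasDerivWithinAt_pos (convex_Ici 0) (f' := y')
      hycont.continuousOn (fun x _ => (hy x).hasDerivWithinAt)
    intro x hx
    rw [interior_Ici] at hx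
    exact (Main x hx).1
  refine ⟨part1, part2, ?_⟩
  have hyle1 : ∀ t, 0 ≤ t → y t ≤ 1 := by
    intro t ht
    rcases ht.lt_or_eq with h | h
    · exact (part1 t h).le
    · rw [← h, hy0]; exact hm1.le
  have hygem : ∀ t, 0 ≤ t → m ≤ y t := by
    intro t ht
    rcases ht.lt_or_eq with h | h
    · have := part2 (self_mem_Ici) (le_of_lt h : (0:ℝ) ≤ t) h
      rw [hy0] at this; exact this.le
    · rw [← h, hy0]
  set w : ℝ → ℝ := fun t => y (max t 0) with hwdef
  have hwmono : Monotone w := by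
    intro s t hst
    exact part2.monotoneOn (le_max_right s 0) (le_max_right t 0) (max_le_max hst le_rfl)
  have hwbdd : BddAbove (range w) := by
    refine ⟨1, ?_⟩
    rintro _ ⟨t, rfl⟩
    exact hyle1 _ (le_max_right t 0)
  have hwten : Tendsto w atTop (nhds (⨆ t, w t)) := tendsto_atTop_ciSup hwmono hwbdd
  set L := ⨆ t, w t with hLdef
  have hyw : w =ᶠ[atTop] y := by
    filter_upwards [eventually_ge_atTop (0:ℝ)] with t ht
    simp [hwdef, max_eq_left ht]
  have hyten : Tendsto y atTop (nhds L) := hwten.congr' hyw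
  have hL1 : L ≤ 1 := le_of_tendsto hyten
    (by filter_upwards [eventually_gt_atTop (0:ℝ)] with t ht; exact (part1 t ht).le)
  have hyleL : ∀ t, 0 ≤ t → y t ≤ L := by
    intro t ht
    have hwt : w t = y t := by simp [hwdef, max_eq_left ht]
    rw [← hwt]
    exact le_ciSup hwbdd t
  have hLm : m < L := by
    have h1 : y 0 < y 1 := part2 self_mem_Ici (by norm_num) zero_lt_one
    have h2 : y 1 ≤ L := hyleL 1 zero_le_one
    rw [hy0] at h1; linarith
  have hLeq : L = 1 := by
    by_contra hne
    have hL1' : L < 1 := lt_of_le_of_ne hL1 hne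
    have hLI : L ∈ Ioo (0:ℝ) 1 := ⟨hm0.trans hLm, hL1'⟩
    have hfL : 0 < f L := fpos L hLI
    have hgood : ∀ T, 0 ≤ T → ∀ s ∈ Icc (0:ℝ) T, 0 < y s ∧ y s < 1 := by
      intro T hT s hs
      rcases hs.1.lt_or_eq with h | h
      · have h2 : y 0 < y s := part2 self_mem_Ici hs.1 h
        rw [hy0] at h2
        exact ⟨hm0.trans h2, part1 s h⟩
      · rw [← h, hy0]; exact ⟨hm0, hm1⟩
    have hkey : ∀ t, 0 ≤ t → (y' t) ^ 2 = (1/4) * ((1 - y t) ^ 2 - (2*α) ^ 2 / (f (y t)) ^ 2) :=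
      fun t ht => KeyE t ht (hgood t ht)
    have hH : ContinuousAt (fun u => (1/4) * ((1 - u) ^ 2 - (2*α) ^ 2 / (f u) ^ 2)) L := by
      have hfc : ContinuousAt f L := (hd1 L hLI).continuousAt
      exact continuousAt_const.mul (((continuousAt_const.sub continuousAt_id).pow 2).sub
        (continuousAt_const.div (hfc.pow 2) (pow_ne_zero 2 hfL.ne')))
    set v2 := (1/4) * ((1 - L) ^ 2 - (2*α) ^ 2 / (f L) ^ 2) with hv2def
    have hcomp : Tendsto (fun t => (1/4) * ((1 - y t) ^ 2 - (2*α) ^ 2 / (f (y t)) ^ 2)) atTop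
        (nhds v2) := hH.tendsto.comp hyten
    have hsq : Tendsto (fun t => (y' t) ^ 2) atTop (nhds v2) := by
      apply hcomp.congr'
      filter_upwards [eventually_ge_atTop (0:ℝ)] with t ht
      exact (hkey t ht).symm
    have hGL : 2 * α < (1 - L) * f L := Gmono L hLm hL1'
    have hv2pos : 0 < v2 := by
      rw [hv2def]
      have h1 : (2*α) ^ 2 < ((1 - L) * f L) ^ 2 :=
        pow_lt_pow_left₀ hGL (by positivity) two_ne_zero
      have h2 : (2*α) ^ 2 / (f L) ^ 2 < (1 - L) ^ 2 := by
        rw [div_lt_iff₀ (by positivity), ← mul_pow]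
        exact h1
      linarith
    set v := Real.sqrt v2 with hvdef
    have hvpos : 0 < v := Real.sqrt_pos.mpr hv2pos
    have hy'ten : Tendsto y' atTop (nhds v) := by
      have h1 : Tendsto (fun t => Real.sqrt ((y' t) ^ 2)) atTop (nhds v) :=
        (Real.continuous_sqrt.continuousAt.tendsto).comp hsq
      apply h1.congr'
      filter_upwards [eventually_gt_atTop (0:ℝ)] with t ht
      rw [Real.sqrt_sq (Main t ht).1.le]
    have hev : ∀ᶠ t in atTop, v/2 ≤ y' t :=
      hy'ten.eventually (eventually_ge_nhds (by linarith))
    obtain ⟨T₀, hT₀⟩ := eventually_atTop.mp (hev.and (eventually_ge_atTop (0:ℝ)))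
    have hmono2 : MonotoneOn (fun t => y t - v/2 * t) (Ici T₀) := by
      apply monotoneOn_of_hasDerivWithinAt_nonneg (convex_Ici T₀)
        (f' := fun t => y' t - v/2 * 1)
      · exact (hycont.sub (continuous_const.mul continuous_id)).continuousOn
      · intro x _
        exact ((hy x).sub ((hasDerivAt_id x).const_mul (v/2))).hasDerivWithinAt
      · intro x hx
        rw [interior_Ici] at hx
        have := (hT₀ x hx.le).1
        linarith
    have hT₀0 : 0 ≤ T₀ := (hT₀ T₀ le_rfl).2
    have h4v : 0 < 4/v := by positivity
    have ht1T : T₀ ≤ T₀ + 4/v := le_add_of_nonneg_right h4v.le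
    have hmt1 := hmono2 self_mem_Ici (mem_Ici.mpr ht1T) ht1T
    simp only at hmt1
    have hvmul : v/2 * (T₀ + 4/v) - v/2 * T₀ = 2 := by
      field_simp
      ring
    have hle1 : y (T₀ + 4/v) ≤ 1 := hyle1 _ (by linarith)
    have hgem : m ≤ y T₀ := hygem T₀ hT₀0
    linarith
  exact hLeq ▸ hyten
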